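/- Let q be an odd prime power with q ≡ 1 (mod 8), ω a generator of the multiplicative characters of F_q^×, g the associated Gauss sums, and q^× = q−1. Then ω(2)^{q^×/4} · g(3q^×/4)^2 · g(q^×/2) = g(3q^×/4) · g(3q^×/8) · g(7q^×/8). -/

import Mathlib

open Finset

section aux

variable {F : Type} [Field F] [Fintype F] [DecidableEq F]

private lemma gaussSum_eq_sum_units (χ : MulChar F ℂ) (Θ : AddChar F ℂ) :
    gaussSum χ Θ = ∑ x : Fˣ, χ (x : F) * Θ (x : F) := by
  have himg : (univ.image (fun x : Fˣ => (x : F))) = univ \ {(0 : F)} := by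
    ext a
    constructor
    · intro ha
      obtain ⟨x, -, rfl⟩ := mem_image.mp ha
      exact mem_sdiff.mpr ⟨mem_univ _, by simp [x.ne_zero]⟩
    · intro ha
      obtain ⟨-, h0⟩ := mem_sdiff.mp ha
      rw [mem_singleton] at h0
      exact mem_image.mpr ⟨Units.mk0 a h0, mem_univ _, rfl⟩
  rw [gaussSum, Finset.sum_eq_sum_sdiff_singleton_add (mem_univ (0 : F)),
    MulChar.map_zero, zero_mul, add_zero, ← himg,
    Finset.sum_image (fun x _ y _ h => Units.ext h)]

/-- The key Jacobi-sum identity behind the Hasse–Davenport product relation: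
`χ(4) J(χ,χ) = J(χ,ρ)` with `ρ` the quadratic character. -/
private lemma key_jacobi (hchar : ringChar F ≠ 2) {χ : MulChar F ℂ} (hχ : χ ≠ 1) :
    χ 4 * jacobiSum χ χ =
      jacobiSum χ ((quadraticChar F).ringHomComp (Int.castRingHom ℂ)) := by
  set ρ : MulChar F ℂ := (quadraticChar F).ringHomComp (Int.castRingHom ℂ) with hρ
  have h2 : (2 : F) ≠ 0 := Ring.two_ne_zero hchar
  -- step A : χ 4 * J(χ,χ) = ∑ t, χ (1 - t^2)
  have stepA : χ 4 * jacobiSum χ χ = ∑ t : F, χ (1 - t ^ 2) := by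
    rw [jacobiSum, Finset.mul_sum]
    have h1 : ∀ x : F, χ 4 * (χ x * χ (1 - x)) = χ (4 * (x * (1 - x))) := by
      intro x; rw [map_mul, map_mul]
    simp_rw [h1]
    let e : F ≃ F :=
      { toFun := fun t => (t + 1) / 2
        invFun := fun s => 2 * s - 1
        left_inv := fun t => by field_simp; ring
        right_inv := fun s => by field_simp; ring }
    rw [← Equiv.sum_comp e (fun x => χ (4 * (x * (1 - x))))]
    refine Finset.sum_congr rfl fun t _ => ?_
    congr 1
    show 4 * (((t + 1) / 2) * (1 - (t + 1) / 2)) = 1 - t ^ 2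
    field_simp
    ring
  -- step B : fiber count over squares
  have stepB : ∑ t : F, χ (1 - t ^ 2) = ∑ u : F, (ρ u + 1) * χ (1 - u) := by
    rw [← Finset.sum_fiberwise_of_maps_to' (g := fun t : F => t ^ 2)
      (fun x _ => mem_univ ((x : F) ^ 2)) (fun u => χ (1 - u))]
    refine Finset.sum_congr rfl fun u _ => ?_
    rw [Finset.sum_const, nsmul_eq_mul]
    congr 1
    have hc := quadraticChar_card_sqrts hchar u
    rw [show {x : F | x ^ 2 = u}.toFinset = univ.filter (fun x : F => x ^ 2 = u) from
      Set.toFinset_setOf _] at hc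
    have : ((univ.filter (fun x : F => x ^ 2 = u)).card : ℂ) =
        ((quadraticChar F u : ℤ) : ℂ) + 1 := by exact_mod_cast congrArg (Int.cast : ℤ → ℂ) hc
    rw [this]; rfl
  -- step C
  have stepC : ∑ u : F, (ρ u + 1) * χ (1 - u) = jacobiSum χ ρ := by
    simp_rw [add_mul, one_mul, Finset.sum_add_distrib]
    have hz : ∑ u : F, χ (1 - u) = 0 := by
      have h := Equiv.sum_comp (Equiv.subLeft (1 : F)) (fun x => χ x)
      simp only [Equiv.subLeft_apply] at h
      rw [h]
      exact MulChar.sum_eq_zero_of_ne_one hχ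
    rw [hz, add_zero, ← jacobiSum, jacobiSum_comm]
  rw [stepA, stepB, stepC]

end aux

/-- For `q ≡ 1 (mod 8)`, with `q^× = q-1`:
`ω(2)^{q^×/4} g(3q^×/4)^2 g(q^×/2) = g(3q^×/4) g(3q^×/8) g(7q^×/8)`. -/
theorem gauss_sum_octic_identity
    (F : Type) [Field F] [Fintype F] [DecidableEq F] (hodd : Odd (Fintype.card F))
    (h8 : Fintype.card F % 8 = 1)
    (ω : MulChar F ℂ) (hω : ∀ χ : MulChar F ℂ, ∃ m : ℤ, χ = ω ^ m)
    (Θ : AddChar F ℂ) (hΘ : Θ ≠ 1)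
    (g : ℤ → ℂ) (hg : ∀ m : ℤ, g m = ∑ x : Fˣ, (ω ^ m) (x : F) * Θ (x : F)) :
    (ω 2) ^ ((Fintype.card F - 1) / 4) *
        g ((3 * (Fintype.card F - 1) / 4 : ℕ)) ^ 2 * g (((Fintype.card F - 1) / 2 : ℕ)) =
      g ((3 * (Fintype.card F - 1) / 4 : ℕ)) * g ((3 * (Fintype.card F - 1) / 8 : ℕ)) *
        g ((7 * (Fintype.card F - 1) / 8 : ℕ)) := by
  classical
  have hq2 : 2 ≤ Fintype.card F := Fintype.one_lt_card
  obtain ⟨k, hk⟩ : ∃ k, Fintype.card F - 1 = 8 * k := ⟨(Fintype.card F - 1) / 8, by omega⟩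
  have hk0 : 0 < k := by omega
  have hchar : ringChar F ≠ 2 := by
    intro h
    have := FiniteField.even_card_iff_char_two.mp h
    obtain ⟨n, hn⟩ := hodd
    omega
  have hΘp : Θ.IsPrimitive := AddChar.IsPrimitive.of_ne_one hΘ
  have hcard : ((Fintype.card F : ℂ)) ≠ 0 := by
    have : (0 : ℕ) < Fintype.card F := by omega
    exact_mod_cast this.ne'
  -- order of ω is q - 1 = 8k
  have hord : orderOf ω = 8 * k := by
    have h1 : orderOf ω ∣ Fintype.card F - 1 := MulChar.orderOf_dvd_card_sub_one (χ := ω)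
    have h2 : Fintype.card F - 1 ∣ orderOf ω := by
      have hnz : (Fintype.card Fˣ : ℕ) ≠ 0 := Fintype.card_ne_zero
      obtain ⟨χ₀, hχ₀⟩ := MulChar.exists_mulChar_orderOf_eq_card_units (R := ℂ) F
        (Complex.isPrimitiveRoot_exp (Fintype.card Fˣ) hnz)
      obtain ⟨m, hm⟩ := hω χ₀
      have hpow : χ₀ ^ (orderOf ω) = 1 := by
        rw [hm, ← zpow_natCast, ← zpow_mul, mul_comm, zpow_mul, zpow_natCast,
          pow_orderOf_eq_one, one_zpow]
      have := orderOf_dvd_of_pow_eq_one hpow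
      rwa [hχ₀, Fintype.card_units] at this
    rw [← hk]; exact Nat.dvd_antisymm h1 h2
  have hne1 : ∀ n : ℕ, 0 < n → n < 8 * k → ω ^ n ≠ 1 := by
    intro n hn1 hn2 hcon
    have := Nat.le_of_dvd hn1 (hord ▸ orderOf_dvd_of_pow_eq_one hcon)
    omega
  -- the quadratic character is ω ^ (4k)
  set ρ : MulChar F ℂ := (quadraticChar F).ringHomComp (Int.castRingHom ℂ) with hρdef
  have hρ2 : ρ ^ 2 = 1 := ((quadraticChar_isQuadratic F).comp _).sq_eq_one
  have hρne : ρ ≠ 1 := by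
    obtain ⟨b, hb⟩ := quadraticChar_exists_neg_one hchar
    have hb0 : b ≠ 0 := by
      intro h; rw [h, quadraticChar_zero] at hb; exact absurd hb (by norm_num)
    intro h
    have : ρ b = 1 := by rw [h, MulChar.one_apply (isUnit_iff_ne_zero.mpr hb0)]
    rw [hρdef, MulChar.ringHomComp_apply, hb] at this
    norm_num at this
  have hρ : ρ = ω ^ (4 * k) := by
    obtain ⟨m, hm⟩ := hω ρ
    have h2m : ω ^ (2 * m) = 1 := by
      rw [mul_comm, zpow_mul, zpow_ofNat, ← hm, hρ2]
    have hdvd : ((8 * k : ℕ) : ℤ) ∣ 2 * m := by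
      rw [← hord]; exact orderOf_dvd_iff_zpow_eq_one.mpr h2m
    obtain ⟨c, hc⟩ : ∃ c : ℤ, m = 4 * k * c := by
      obtain ⟨c, hc⟩ := hdvd
      refine ⟨c, ?_⟩
      push_cast at hc ⊢
      linarith
    rcases Int.even_or_odd c with ⟨d, hd⟩ | ⟨d, hd⟩
    · exfalso
      apply hρne
      rw [hm, hc, hd, show (4 : ℤ) * k * (d + d) = (8 * k) * d by ring, zpow_mul]
      rw [show ((8 : ℤ) * k) = ((8 * k : ℕ) : ℤ) by push_cast; ring, zpow_natCast,
        ← hord, pow_orderOf_eq_one, one_zpow]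
    · rw [hm, hc, hd, show (4 : ℤ) * k * (2 * d + 1) = (8 * k) * d + 4 * k by ring,
        zpow_add, show ((8 : ℤ) * k) = ((8 * k : ℕ) : ℤ) by push_cast; ring, zpow_mul,
        zpow_natCast, ← hord, pow_orderOf_eq_one, one_zpow, one_mul,
        show ((4 : ℤ) * k) = ((4 * k : ℕ) : ℤ) by push_cast; ring, zpow_natCast]
  -- rewrite the g's as Gauss sums
  have hgn : ∀ n : ℕ, g (n : ℤ) = gaussSum (ω ^ n) Θ := by
    intro n
    rw [hg, gaussSum_eq_sum_units, zpow_natCast]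
  have e6 : 3 * (Fintype.card F - 1) / 4 = 6 * k := by omega
  have e4 : (Fintype.card F - 1) / 2 = 4 * k := by omega
  have e3 : 3 * (Fintype.card F - 1) / 8 = 3 * k := by omega
  have e7 : 7 * (Fintype.card F - 1) / 8 = 7 * k := by omega
  have e2 : (Fintype.card F - 1) / 4 = 2 * k := by omega
  rw [e6, e4, e3, e7, e2, hgn, hgn, hgn, hgn]
  set g3 := gaussSum (ω ^ (3 * k)) Θ with hg3
  set g4 := gaussSum (ω ^ (4 * k)) Θ with hg4
  set g6 := gaussSum (ω ^ (6 * k)) Θ with hg6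
  set g7 := gaussSum (ω ^ (7 * k)) Θ with hg7
  -- the three key relations
  have hΕ2 : g6 * jacobiSum (ω ^ (3 * k)) (ω ^ (3 * k)) = g3 * g3 := by
    have := jacobiSum_mul_nontrivial
      (χ := ω ^ (3 * k)) (φ := ω ^ (3 * k)) (by
        rw [← pow_add, show 3 * k + 3 * k = 6 * k by ring]
        exact hne1 (6 * k) (by omega) (by omega)) Θ
    rwa [← pow_add, show 3 * k + 3 * k = 6 * k by ring] at this
  have hΕ3 : g7 * jacobiSum (ω ^ (3 * k)) ρ = g3 * g4 := by
    have := jacobiSum_mul_nontrivial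
      (χ := ω ^ (3 * k)) (φ := ω ^ (4 * k)) (by
        rw [← pow_add, show 3 * k + 4 * k = 7 * k by ring]
        exact hne1 (7 * k) (by omega) (by omega)) Θ
    rw [← pow_add, show 3 * k + 4 * k = 7 * k by ring] at this
    rwa [hρ]
  have hΕ1 : (ω ^ (3 * k)) 4 * jacobiSum (ω ^ (3 * k)) (ω ^ (3 * k)) =
      jacobiSum (ω ^ (3 * k)) ρ := by
    rw [hρdef]
    exact key_jacobi hchar (hne1 (3 * k) (by omega) (by omega))
  have hΕ4 : (ω 2) ^ (2 * k) * (ω ^ (3 * k)) 4 = 1 := by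
    rw [MulChar.pow_apply' ω (by omega : 3 * k ≠ 0) 4,
      show (4 : F) = 2 * 2 by norm_num, map_mul, ← pow_two, ← pow_mul, ← pow_add,
      show 2 * k + 2 * (3 * k) = 8 * k by ring, ← map_pow,
      ← hk, FiniteField.pow_card_sub_one_eq_one (2 : F) (Ring.two_ne_zero hchar), map_one]
  -- nonvanishing
  have hJ : jacobiSum (ω ^ (3 * k)) ρ ≠ 0 := by
    intro h
    have h3 : g3 ≠ 0 := gaussSum_ne_zero_of_nontrivial hcard
      (hne1 (3 * k) (by omega) (by omega)) hΘp
    have h4 : g4 ≠ 0 := gaussSum_ne_zero_of_nontrivial hcard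
      (hne1 (4 * k) (by omega) (by omega)) hΘp
    rw [h, mul_zero] at hΕ3
    exact mul_ne_zero h3 h4 hΕ3.symm
  apply mul_left_cancel₀ hJ
  set J1 := jacobiSum (ω ^ (3 * k)) (ω ^ (3 * k))
  set J2 := jacobiSum (ω ^ (3 * k)) ρ
  set C := (ω ^ (3 * k)) 4
  set A := (ω 2) ^ (2 * k)
  linear_combination (-(A * g6 ^ 2 * g4)) * hΕ1 + (g6 * g4) * hΕ2 + (-(g6 * g3)) * hΕ3 +
    (g6 ^ 2 * g4 * J1) * hΕ4
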